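/- Let G be a countable discrete amenable group. Then for every ε > 0, every Hilbert space H, and every unitary ε-representation φ: G → U(H), there exists a positive definite map ψ: G → B(H) such that ‖φ(x) − ψ(x)‖ ≤ ε for all x ∈ G. -/

import Mathlib

open scoped ComplexOrder

/-- `f : G → ℂ` is bounded, i.e. `f ∈ ℓ∞(G)`. -/
def IsBddFun {G : Type*} (f : G → ℂ) : Prop := ∃ C : ℝ, ∀ x, ‖f x‖ ≤ C

/-- A state on `ℓ∞(G)`: a positive unital linear functional, encoded as a functional on
all functions `G → ℂ` whose linearity, positivity and unitality are imposed on bounded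
functions. -/
structure LinftyState (G : Type*) where
  toFun : (G → ℂ) → ℂ
  map_add : ∀ f g : G → ℂ, IsBddFun f → IsBddFun g → toFun (f + g) = toFun f + toFun g
  map_smul : ∀ (c : ℂ) (f : G → ℂ), IsBddFun f → toFun (c • f) = c * toFun f
  pos : ∀ f : G → ℂ, IsBddFun f → (∀ x, 0 ≤ f x) → 0 ≤ toFun f
  unital : toFun (fun _ => (1 : ℂ)) = 1

/-- `G` is amenable: there is a left-invariant mean (state) on `ℓ∞(G)`. -/
def Amenable (G : Type*) [Group G] : Prop :=
  ∃ τ : LinftyState G, ∀ (s : G) (f : G → ℂ), IsBddFun f →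
    τ.toFun (fun x => f (s * x)) = τ.toFun f

namespace LinftyState
variable {G : Type*} (τ : LinftyState G)

lemma isBdd_const (c : ℂ) : IsBddFun (fun _ : G => c) := ⟨‖c‖, fun _ => le_rfl⟩

lemma map_const (c : ℂ) : τ.toFun (fun _ => c) = c := by
  have h := τ.map_smul c (fun _ => (1:ℂ)) (isBdd_const 1)
  have h2 : (c • fun _ : G => (1:ℂ)) = fun _ => c := by funext x; simp
  rw [h2] at h
  rw [h, τ.unital, mul_one]

private lemma hmax (a : ℝ) : max a 0 = a + max (-a) 0 := by
  rcases le_total a 0 with h | h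
  · rw [max_eq_right h, max_eq_left (by linarith)]; ring
  · rw [max_eq_left h, max_eq_right (by linarith)]; ring

lemma real_of_real {f : G → ℂ} (hf : IsBddFun f) (hre : ∀ x, (f x).im = 0) :
    (τ.toFun f).im = 0 := by
  obtain ⟨C, hC⟩ := hf
  set p : G → ℂ := fun x => ((max (f x).re 0 : ℝ) : ℂ) with hp
  set q : G → ℂ := fun x => ((max (-(f x).re) 0 : ℝ) : ℂ) with hq
  have habs : ∀ x, |(f x).re| ≤ C := fun x => (Complex.abs_re_le_norm (f x)).trans (hC x)
  have hbp : IsBddFun p := ⟨C, fun x => by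
    simp only [hp, Complex.norm_real, Real.norm_eq_abs]
    rw [abs_of_nonneg (le_max_right _ _)]
    exact max_le ((le_abs_self _).trans (habs x)) ((abs_nonneg _).trans (habs x))⟩
  have hbq : IsBddFun q := ⟨C, fun x => by
    simp only [hq, Complex.norm_real, Real.norm_eq_abs]
    rw [abs_of_nonneg (le_max_right _ _)]
    exact max_le ((neg_le_abs _).trans (habs x)) ((abs_nonneg _).trans (habs x))⟩
  have hfq : p = f + q := by
    funext x
    have hxf : f x = ((f x).re : ℂ) := by apply Complex.ext <;> simp [hre x]
    show ((max (f x).re 0 : ℝ) : ℂ) = f x + ((max (-(f x).re) 0 : ℝ) : ℂ)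
    rw [hxf]
    simp only [Complex.ofReal_re]
    rw [hmax ((f x).re)]
    push_cast
    ring
  have hpos_p : 0 ≤ τ.toFun p := τ.pos p hbp (fun x => by
    rw [Complex.nonneg_iff]; constructor <;> simp [hp, le_max_right])
  have hpos_q : 0 ≤ τ.toFun q := τ.pos q hbq (fun x => by
    rw [Complex.nonneg_iff]; constructor <;> simp [hq, le_max_right])
  have h1 : τ.toFun p = τ.toFun f + τ.toFun q := by rw [hfq]; exact τ.map_add f q ⟨C, hC⟩ hbq
  have h2 : (τ.toFun p).im = 0 := ((Complex.nonneg_iff).1 hpos_p).2.symm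
  have h3 : (τ.toFun q).im = 0 := ((Complex.nonneg_iff).1 hpos_q).2.symm
  have := congrArg Complex.im h1
  simp only [Complex.add_im, h2, h3] at this
  linarith

lemma re_le_of_le {f : G → ℂ} (hf : IsBddFun f) (hre : ∀ x, (f x).im = 0)
    {C : ℝ} (hC : ∀ x, (f x).re ≤ C) : (τ.toFun f).re ≤ C := by
  obtain ⟨D, hD⟩ := hf
  set g : G → ℂ := fun x => (C : ℂ) - f x with hg
  have hbg : IsBddFun g := ⟨|C| + D, fun x => by
    calc ‖(C:ℂ) - f x‖ ≤ ‖(C:ℂ)‖ + ‖f x‖ := norm_sub_le _ _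
    _ ≤ |C| + D := by simp only [Complex.norm_real, Real.norm_eq_abs]; linarith [hD x]⟩
  have hpos : 0 ≤ τ.toFun g := τ.pos g hbg (fun x => by
    rw [Complex.nonneg_iff]
    constructor
    · simp only [hg, Complex.sub_re, Complex.ofReal_re]; linarith [hC x]
    · simp [hg, hre x])
  have hsum : τ.toFun g + τ.toFun f = (C : ℂ) := by
    rw [← τ.map_add g f hbg ⟨D, hD⟩]
    have : g + f = fun _ => (C : ℂ) := by funext x; simp [hg]
    rw [this, τ.map_const]
  have h1 : (τ.toFun g).re + (τ.toFun f).re = C := by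
    have := congrArg Complex.re hsum; simpa using this
  have h2 : 0 ≤ (τ.toFun g).re := ((Complex.nonneg_iff).1 hpos).1
  linarith

lemma norm_le [Nonempty G] {f : G → ℂ} (hf : IsBddFun f) {C : ℝ} (hC : ∀ x, ‖f x‖ ≤ C) :
    ‖τ.toFun f‖ ≤ C := by
  have hC0 : 0 ≤ C := le_trans (norm_nonneg _) (hC (Classical.arbitrary G))
  set z := τ.toFun f with hz
  by_cases h0 : z = 0
  · rw [h0]; simpa using hC0
  · set c : ℂ := (starRingEnd ℂ) z / ‖z‖ with hc
    have hznorm : (‖z‖ : ℂ) ≠ 0 := by simpa using h0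
    have hcnorm : ‖c‖ = 1 := by
      rw [hc]
      rw [norm_div]
      simp only [Complex.norm_conj, Complex.norm_real, Real.norm_eq_abs, abs_norm]
      exact div_self (norm_ne_zero_iff.2 h0)
    have h1 : (starRingEnd ℂ) z * z = ((‖z‖:ℂ))^2 := by
      rw [mul_comm, Complex.mul_conj, Complex.normSq_eq_norm_sq]
      push_cast; ring
    have hcz : c * z = (‖z‖ : ℂ) := by
      rw [hc, div_mul_eq_mul_div, h1, sq, mul_div_assoc, div_self hznorm, mul_one]
    obtain ⟨D, hD⟩ := hf
    set g : G → ℂ := fun x => (((c * f x).re : ℝ) : ℂ) with hg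
    set h : G → ℂ := fun x => (((c * f x).im : ℝ) : ℂ) with hh
    have hnormcf : ∀ x, ‖c * f x‖ ≤ C := fun x => by
      rw [norm_mul, hcnorm, one_mul]; exact hC x
    have hbg : IsBddFun g := ⟨C, fun x => by
      simp only [hg, Complex.norm_real, Real.norm_eq_abs]
      exact (Complex.abs_re_le_norm _).trans (hnormcf x)⟩
    have hbh : IsBddFun h := ⟨C, fun x => by
      simp only [hh, Complex.norm_real, Real.norm_eq_abs]
      exact (Complex.abs_im_le_norm _).trans (hnormcf x)⟩
    have hbIh : IsBddFun (Complex.I • h) := ⟨C, fun x => by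
      simp only [Pi.smul_apply, smul_eq_mul, norm_mul, Complex.norm_I, one_mul, hh,
        Complex.norm_real, Real.norm_eq_abs]
      exact (Complex.abs_im_le_norm _).trans (hnormcf x)⟩
    have hdecomp : c • f = g + Complex.I • h := by
      funext x
      simp only [Pi.add_apply, Pi.smul_apply, smul_eq_mul, hg, hh]
      rw [mul_comm Complex.I]
      exact (Complex.re_add_im (c * f x)).symm
    have e1 : τ.toFun (c • f) = c * z := τ.map_smul c f ⟨D, hD⟩
    have e2 : τ.toFun (c • f) = τ.toFun g + Complex.I * τ.toFun h := by
      rw [hdecomp, τ.map_add g (Complex.I • h) hbg hbIh, τ.map_smul Complex.I h hbh]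
    have hhim : (τ.toFun h).im = 0 := τ.real_of_real hbh (fun x => by simp [hh])
    have hre : (τ.toFun g).re ≤ C := τ.re_le_of_le hbg (fun x => by simp [hg]) (fun x => by
      simp only [hg, Complex.ofReal_re]
      exact (Complex.re_le_norm _).trans (hnormcf x))
    have key : (‖z‖:ℂ) = τ.toFun g + Complex.I * τ.toFun h := by rw [← hcz, ← e1, e2]
    have hzre := congrArg Complex.re key
    simp only [Complex.ofReal_re, Complex.add_re, Complex.mul_re, Complex.I_re, Complex.I_im,
      hhim, zero_mul, one_mul, mul_zero, sub_zero, zero_sub, neg_zero, add_zero] at hzre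
    rw [hzre]
    exact hre

end LinftyState

namespace Aux

lemma IsBddFun.add' {G : Type*} {f g : G → ℂ} (hf : IsBddFun f) (hg : IsBddFun g) :
    IsBddFun (f + g) := by
  obtain ⟨C, hC⟩ := hf; obtain ⟨D, hD⟩ := hg
  exact ⟨C + D, fun x => (norm_add_le _ _).trans (add_le_add (hC x) (hD x))⟩

lemma IsBddFun.zero' {G : Type*} : IsBddFun (0 : G → ℂ) := ⟨0, fun _ => by simp⟩

lemma IsBddFun.sum' {G : Type*} {ι : Type*} (s : Finset ι) (f : ι → G → ℂ)
    (hb : ∀ i ∈ s, IsBddFun (f i)) : IsBddFun (∑ i ∈ s, f i) := by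
  classical
  induction s using Finset.induction_on with
  | empty => simpa using IsBddFun.zero'
  | insert _ _ hni ih =>
    rw [Finset.sum_insert hni]
    exact IsBddFun.add' (hb _ (Finset.mem_insert_self _ _))
      (ih fun i hi => hb i (Finset.mem_insert_of_mem hi))

lemma map_zero' {G : Type*} (τ : LinftyState G) : τ.toFun 0 = 0 := by
  have h := τ.map_smul 0 (fun _ => (1:ℂ)) ⟨1, fun _ => by simp⟩
  have h2 : ((0:ℂ) • fun _ : G => (1:ℂ)) = 0 := by funext x; simp
  rw [h2] at h; rw [h, zero_mul]

lemma map_sum' {G : Type*} (τ : LinftyState G) {ι : Type*} (s : Finset ι) (f : ι → G → ℂ)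
    (hb : ∀ i ∈ s, IsBddFun (f i)) :
    τ.toFun (∑ i ∈ s, f i) = ∑ i ∈ s, τ.toFun (f i) := by
  classical
  induction s using Finset.induction_on with
  | empty => simpa using map_zero' τ
  | insert _ _ hni ih =>
    rw [Finset.sum_insert hni, Finset.sum_insert hni,
      τ.map_add _ _ (hb _ (Finset.mem_insert_self _ _))
        (IsBddFun.sum' _ _ fun i hi => hb i (Finset.mem_insert_of_mem hi)),
      ih fun i hi => hb i (Finset.mem_insert_of_mem hi)]



lemma bdd_comp {G G' : Type*} {f : G → ℂ} (hf : IsBddFun f) (σ : G' → G) :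
    IsBddFun (fun t => f (σ t)) := by
  obtain ⟨C, hC⟩ := hf; exact ⟨C, fun t => hC (σ t)⟩

/-- The state obtained by precomposing with inversion. -/
noncomputable def invState {G : Type*} [Group G] (τ : LinftyState G) : LinftyState G where
  toFun f := τ.toFun (fun t => f t⁻¹)
  map_add f g hf hg := τ.map_add _ _ (bdd_comp hf _) (bdd_comp hg _)
  map_smul c f hf := τ.map_smul c _ (bdd_comp hf _)
  pos f hf h := τ.pos _ (bdd_comp hf _) (fun x => h x⁻¹)
  unital := τ.unital

lemma invState_rightInv {G : Type*} [Group G] {τ : LinftyState G}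
    (hτ : ∀ (s : G) (f : G → ℂ), IsBddFun f → τ.toFun (fun x => f (s * x)) = τ.toFun f)
    (s : G) (f : G → ℂ) (hf : IsBddFun f) :
    (invState τ).toFun (fun t => f (t * s)) = (invState τ).toFun f := by
  show τ.toFun (fun t => f (t⁻¹ * s)) = τ.toFun (fun t => f t⁻¹)
  have h := hτ s⁻¹ (fun t => f t⁻¹) (bdd_comp hf _)
  have e : (fun t => f ((s⁻¹ * t)⁻¹)) = fun t => f (t⁻¹ * s) := by
    funext t; rw [mul_inv_rev, inv_inv]
  rw [← h]
  exact congrArg τ.toFun e.symm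


section Op
variable {G : Type*} [Group G] {H : Type} [NormedAddCommGroup H] [InnerProductSpace ℂ H]
  [CompleteSpace H]

noncomputable def uA (φ : G → H →L[ℂ] H) (x t : G) : H →L[ℂ] H :=
  (ContinuousLinearMap.adjoint (φ t)).comp (φ (t * x))

lemma uA_inner (φ : G → H →L[ℂ] H) (x t : G) (ξ η : H) :
    (inner ℂ (uA φ x t ξ) η : ℂ) = inner ℂ (φ (t * x) ξ) (φ t η) :=
  by rw [uA, ContinuousLinearMap.comp_apply, ContinuousLinearMap.adjoint_inner_left]

lemma uA_norm (φ : G → H →L[ℂ] H) (hφ1 : ∀ y, ‖φ y‖ ≤ 1) (x t : G) (ξ : H) :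
    ‖uA φ x t ξ‖ ≤ ‖ξ‖ := by
  have h1 : ‖ContinuousLinearMap.adjoint (φ t)‖ ≤ 1 := by
    rw [← ContinuousLinearMap.star_eq_adjoint, norm_star]; exact hφ1 t
  have h2 : ‖φ (t * x) ξ‖ ≤ ‖ξ‖ := by
    calc ‖φ (t * x) ξ‖ ≤ ‖φ (t * x)‖ * ‖ξ‖ := ContinuousLinearMap.le_opNorm _ _
    _ ≤ 1 * ‖ξ‖ := by have := hφ1 (t * x); nlinarith [norm_nonneg ξ]
    _ = ‖ξ‖ := one_mul _
  calc ‖uA φ x t ξ‖ = ‖ContinuousLinearMap.adjoint (φ t) (φ (t * x) ξ)‖ := rfl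
  _ ≤ ‖ContinuousLinearMap.adjoint (φ t)‖ * ‖φ (t * x) ξ‖ := ContinuousLinearMap.le_opNorm _ _
  _ ≤ ‖ξ‖ := by nlinarith [norm_nonneg (φ (t * x) ξ), norm_nonneg (ContinuousLinearMap.adjoint (φ t))]

lemma uA_bdd (σ : LinftyState G) (φ : G → H →L[ℂ] H) (hφ1 : ∀ y, ‖φ y‖ ≤ 1) (x : G) (ξ η : H) :
    IsBddFun (fun t => (inner ℂ (uA φ x t ξ) η : ℂ)) :=
  ⟨‖ξ‖ * ‖η‖, fun t => (norm_inner_le_norm _ _).trans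
    (mul_le_mul_of_nonneg_right (uA_norm φ hφ1 x t ξ) (norm_nonneg η))⟩

noncomputable def dA (σ : LinftyState G) (φ : G → H →L[ℂ] H)
    (hφ1 : ∀ y, ‖φ y‖ ≤ 1) (x : G) (ξ : H) : StrongDual ℂ H :=
  LinearMap.mkContinuous
    { toFun := fun η => σ.toFun (fun t => (inner ℂ (uA φ x t ξ) η : ℂ))
      map_add' := fun η η' => by
        show σ.toFun (fun t => (inner ℂ (uA φ x t ξ) (η + η') : ℂ))
          = σ.toFun (fun t => (inner ℂ (uA φ x t ξ) η : ℂ))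
            + σ.toFun (fun t => (inner ℂ (uA φ x t ξ) η' : ℂ))
        have e : (fun t => (inner ℂ (uA φ x t ξ) (η + η') : ℂ))
            = (fun t => (inner ℂ (uA φ x t ξ) η : ℂ)) + fun t => (inner ℂ (uA φ x t ξ) η' : ℂ) := by
          funext t; simp [inner_add_right]
        rw [e, σ.map_add _ _ (uA_bdd σ φ hφ1 x ξ η) (uA_bdd σ φ hφ1 x ξ η')]
      map_smul' := fun c η => by
        show σ.toFun (fun t => (inner ℂ (uA φ x t ξ) (c • η) : ℂ))
          = (RingHom.id ℂ) c * σ.toFun (fun t => (inner ℂ (uA φ x t ξ) η : ℂ))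
        have e : (fun t => (inner ℂ (uA φ x t ξ) (c • η) : ℂ))
            = c • fun t => (inner ℂ (uA φ x t ξ) η : ℂ) := by
          funext t; simp [inner_smul_right]
        rw [e, σ.map_smul _ _ (uA_bdd σ φ hφ1 x ξ η)]; rfl }
    ‖ξ‖ (fun η => by
      haveI : Nonempty G := ⟨1⟩
      exact σ.norm_le (uA_bdd σ φ hφ1 x ξ η) (fun t => (norm_inner_le_norm _ _).trans
        (mul_le_mul_of_nonneg_right (uA_norm φ hφ1 x t ξ) (norm_nonneg η))))

lemma dA_apply (σ : LinftyState G) (φ : G → H →L[ℂ] H) (hφ1 : ∀ y, ‖φ y‖ ≤ 1) (x : G) (ξ η : H) :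
    dA σ φ hφ1 x ξ η = σ.toFun (fun t => (inner ℂ (uA φ x t ξ) η : ℂ)) := rfl

lemma dA_norm (σ : LinftyState G) (φ : G → H →L[ℂ] H) (hφ1 : ∀ y, ‖φ y‖ ≤ 1) (x : G) (ξ : H) :
    ‖dA σ φ hφ1 x ξ‖ ≤ ‖ξ‖ :=
  LinearMap.mkContinuous_norm_le _ (norm_nonneg ξ) _

noncomputable def psiA (σ : LinftyState G) (φ : G → H →L[ℂ] H)
    (hφ1 : ∀ y, ‖φ y‖ ≤ 1) (x : G) : H →L[ℂ] H :=
  LinearMap.mkContinuous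
    { toFun := fun ξ => (InnerProductSpace.toDual ℂ H).symm (dA σ φ hφ1 x ξ)
      map_add' := fun ξ ξ' => by
        show (InnerProductSpace.toDual ℂ H).symm (dA σ φ hφ1 x (ξ + ξ'))
          = (InnerProductSpace.toDual ℂ H).symm (dA σ φ hφ1 x ξ)
            + (InnerProductSpace.toDual ℂ H).symm (dA σ φ hφ1 x ξ')
        rw [← map_add]
        congr 1
        apply ContinuousLinearMap.ext; intro η
        rw [ContinuousLinearMap.add_apply, dA_apply, dA_apply, dA_apply]
        have e : (fun t => (inner ℂ (uA φ x t (ξ + ξ')) η : ℂ))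
            = (fun t => (inner ℂ (uA φ x t ξ) η : ℂ)) + fun t => (inner ℂ (uA φ x t ξ') η : ℂ) := by
          funext t; simp [map_add, inner_add_left]
        rw [e, σ.map_add _ _ (uA_bdd σ φ hφ1 x ξ η) (uA_bdd σ φ hφ1 x ξ' η)]
      map_smul' := fun c ξ => by
        show (InnerProductSpace.toDual ℂ H).symm (dA σ φ hφ1 x (c • ξ))
          = (RingHom.id ℂ) c • (InnerProductSpace.toDual ℂ H).symm (dA σ φ hφ1 x ξ)
        have e1 : dA σ φ hφ1 x (c • ξ) = (starRingEnd ℂ) c • dA σ φ hφ1 x ξ := by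
          apply ContinuousLinearMap.ext; intro η
          rw [ContinuousLinearMap.smul_apply, dA_apply, dA_apply]
          have e : (fun t => (inner ℂ (uA φ x t (c • ξ)) η : ℂ))
              = (starRingEnd ℂ) c • fun t => (inner ℂ (uA φ x t ξ) η : ℂ) := by
            funext t; simp [map_smul, inner_smul_left, mul_comm]
          rw [e, σ.map_smul _ _ (uA_bdd σ φ hφ1 x ξ η)]; rfl
        rw [e1, map_smulₛₗ]
        simp }
    1 (fun ξ => by
      rw [one_mul]
      show ‖(InnerProductSpace.toDual ℂ H).symm (dA σ φ hφ1 x ξ)‖ ≤ ‖ξ‖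
      rw [LinearIsometryEquiv.norm_map]
      exact dA_norm σ φ hφ1 x ξ)

lemma psiA_inner (σ : LinftyState G) (φ : G → H →L[ℂ] H) (hφ1 : ∀ y, ‖φ y‖ ≤ 1) (x : G) (ξ η : H) :
    (inner ℂ (psiA σ φ hφ1 x ξ) η : ℂ) = σ.toFun (fun t => (inner ℂ (uA φ x t ξ) η : ℂ)) := by
  show (inner ℂ ((InnerProductSpace.toDual ℂ H).symm (dA σ φ hφ1 x ξ)) η : ℂ) = _
  rw [InnerProductSpace.toDual_symm_apply]
  rfl

end Op
end Aux


/-- A map `ψ : G → B(H)` is positive definite. -/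
def PosDefMap {G : Type*} [Group G] {H : Type*} [NormedAddCommGroup H]
    [InnerProductSpace ℂ H] (ψ : G → H →L[ℂ] H) : Prop :=
  ∀ (n : ℕ) (x : Fin n → G) (ξ : Fin n → H),
    0 ≤ ∑ i, ∑ j, (inner ℂ (ψ ((x i)⁻¹ * x j) (ξ j)) (ξ i) : ℂ)

/-- If `G` is a countable discrete amenable group, then for every `ε > 0`,
every Hilbert space `H`, and every unitary `ε`-representation `φ : G → U(H)`, there is a
positive definite map `ψ : G → B(H)` with `‖φ(x) - ψ(x)‖ ≤ ε` for all `x ∈ G`. -/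
theorem stmt_14 (G : Type*) [Group G] [Countable G] (hG : Amenable G) :
    ∀ ε : ℝ, 0 < ε →
      ∀ (H : Type) [NormedAddCommGroup H] [InnerProductSpace ℂ H] [CompleteSpace H],
        ∀ φ : G → H →L[ℂ] H, (∀ x, φ x ∈ unitary (H →L[ℂ] H)) →
          (∀ x y, ‖φ (x * y) - φ x * φ y‖ ≤ ε) →
          ∃ ψ : G → H →L[ℂ] H, PosDefMap ψ ∧ ∀ x, ‖φ x - ψ x‖ ≤ ε := by
  obtain ⟨τ, hτ⟩ := hG
  intro ε hε H _ _ _ φ hφ hrep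
  haveI : Nonempty G := ⟨1⟩
  have hφ1 : ∀ y, ‖φ y‖ ≤ 1 := by
    intro y
    have h := (Unitary.mem_iff.mp (hφ y)).1
    have h2 : ‖φ y‖ * ‖φ y‖ = ‖star (φ y) * φ y‖ := (CStarRing.norm_star_mul_self).symm
    rw [h] at h2
    have h3 : ‖(1 : H →L[ℂ] H)‖ ≤ 1 := ContinuousLinearMap.norm_id_le
    nlinarith [norm_nonneg (φ y)]
  have hv : ∀ (y : G) (v : H), ‖φ y v‖ ≤ ‖v‖ := fun y v => by
    calc ‖φ y v‖ ≤ ‖φ y‖ * ‖v‖ := ContinuousLinearMap.le_opNorm _ _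
    _ ≤ 1 * ‖v‖ := mul_le_mul_of_nonneg_right (hφ1 y) (norm_nonneg v)
    _ = ‖v‖ := one_mul _
  set σ := Aux.invState τ with hσ
  have hinv : ∀ (s : G) (f : G → ℂ), IsBddFun f →
      σ.toFun (fun t => f (t * s)) = σ.toFun f :=
    fun s f hf => Aux.invState_rightInv hτ s f hf
  refine ⟨Aux.psiA σ φ hφ1, ?_, ?_⟩
  · -- positive definiteness
    intro n x ξ
    have hgb : ∀ i j : Fin n,
        IsBddFun (fun t => (inner ℂ (φ (t * x j) (ξ j)) (φ (t * x i) (ξ i)) : ℂ)) := fun i j =>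
      ⟨‖ξ j‖ * ‖ξ i‖, fun t => (norm_inner_le_norm _ _).trans
        (mul_le_mul (hv _ _) (hv _ _) (norm_nonneg _) (norm_nonneg _))⟩
    have hterm : ∀ i j : Fin n, (inner ℂ (Aux.psiA σ φ hφ1 ((x i)⁻¹ * x j) (ξ j)) (ξ i) : ℂ)
        = σ.toFun (fun t => (inner ℂ (φ (t * x j) (ξ j)) (φ (t * x i) (ξ i)) : ℂ)) := by
      intro i j
      rw [Aux.psiA_inner]
      have e1 : (fun t => (inner ℂ (Aux.uA φ ((x i)⁻¹ * x j) t (ξ j)) (ξ i) : ℂ))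
          = fun t => (inner ℂ (φ (t * ((x i)⁻¹ * x j)) (ξ j)) (φ t (ξ i)) : ℂ) := by
        funext t; rw [Aux.uA_inner]
      rw [e1]
      have hFbdd : IsBddFun
          (fun t => (inner ℂ (φ (t * ((x i)⁻¹ * x j)) (ξ j)) (φ t (ξ i)) : ℂ)) :=
        ⟨‖ξ j‖ * ‖ξ i‖, fun t => (norm_inner_le_norm _ _).trans
          (mul_le_mul (hv _ _) (hv _ _) (norm_nonneg _) (norm_nonneg _))⟩
      have h2 := hinv (x i) _ hFbdd
      rw [← h2]
      congr 1
      funext t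
      have e2 : t * x i * ((x i)⁻¹ * x j) = t * x j := by group
      rw [e2]
    have hsum : ∑ i, ∑ j, (inner ℂ (Aux.psiA σ φ hφ1 ((x i)⁻¹ * x j) (ξ j)) (ξ i) : ℂ)
        = σ.toFun (fun t =>
            (inner ℂ (∑ k, φ (t * x k) (ξ k)) (∑ k, φ (t * x k) (ξ k)) : ℂ)) := by
      have e : (fun t => (inner ℂ (∑ k, φ (t * x k) (ξ k)) (∑ k, φ (t * x k) (ξ k)) : ℂ))
          = ∑ i : Fin n, ∑ j : Fin n,
              (fun t => (inner ℂ (φ (t * x j) (ξ j)) (φ (t * x i) (ξ i)) : ℂ)) := by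
        funext t
        rw [Finset.sum_apply]
        simp only [Finset.sum_apply]
        rw [sum_inner]
        simp_rw [inner_sum]
        rw [Finset.sum_comm]
      rw [e, Aux.map_sum' σ _ _ (fun i _ => Aux.IsBddFun.sum' _ _ (fun j _ => hgb i j))]
      congr 1
      funext i
      rw [Aux.map_sum' σ _ _ (fun j _ => hgb i j)]
      congr 1
      funext j
      exact hterm i j
    rw [hsum]
    apply σ.pos
    · refine ⟨(∑ k, ‖ξ k‖) * (∑ k, ‖ξ k‖), fun t => ?_⟩
      have hw : ‖∑ k, φ (t * x k) (ξ k)‖ ≤ ∑ k, ‖ξ k‖ :=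
        (norm_sum_le _ _).trans (Finset.sum_le_sum fun k _ => hv _ _)
      exact (norm_inner_le_norm _ _).trans
        (mul_le_mul hw hw (norm_nonneg _) ((norm_nonneg _).trans hw))
    · intro t
      rw [inner_self_eq_norm_sq_to_K, ← RCLike.ofReal_pow, RCLike.ofReal_nonneg]
      positivity
  · -- proximity
    intro x
    refine ContinuousLinearMap.opNorm_le_bound _ hε.le (fun ξ => ?_)
    set η := Aux.psiA σ φ hφ1 x ξ - φ x ξ with hη
    have hsub : ∀ t : G, ‖Aux.uA φ x t ξ - φ x ξ‖ ≤ ε * ‖ξ‖ := by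
      intro t
      have hid : (ContinuousLinearMap.adjoint (φ t)).comp (φ t) = 1 := by
        rw [← ContinuousLinearMap.star_eq_adjoint]
        exact (Unitary.mem_iff.mp (hφ t)).1
      have hid2 : ContinuousLinearMap.adjoint (φ t) (φ t (φ x ξ)) = φ x ξ := by
        have := congrArg (fun (T : H →L[ℂ] H) => T (φ x ξ)) hid
        simpa using this
      have e3 : Aux.uA φ x t ξ - φ x ξ
          = ContinuousLinearMap.adjoint (φ t) ((φ (t * x) - φ t * φ x) ξ) := by
        rw [ContinuousLinearMap.sub_apply, map_sub]
        show Aux.uA φ x t ξ - φ x ξ = ContinuousLinearMap.adjoint (φ t) (φ (t * x) ξ)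
          - ContinuousLinearMap.adjoint (φ t) ((φ t * φ x) ξ)
        rw [ContinuousLinearMap.mul_apply, hid2]
        rfl
      rw [e3]
      have h4 : ‖ContinuousLinearMap.adjoint (φ t)‖ ≤ 1 := by
        rw [← ContinuousLinearMap.star_eq_adjoint, norm_star]; exact hφ1 t
      calc ‖ContinuousLinearMap.adjoint (φ t) ((φ (t * x) - φ t * φ x) ξ)‖
          ≤ ‖ContinuousLinearMap.adjoint (φ t)‖ * ‖(φ (t * x) - φ t * φ x) ξ‖ :=
            ContinuousLinearMap.le_opNorm _ _
      _ ≤ 1 * ‖(φ (t * x) - φ t * φ x) ξ‖ :=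
            mul_le_mul_of_nonneg_right h4 (norm_nonneg _)
      _ = ‖(φ (t * x) - φ t * φ x) ξ‖ := one_mul _
      _ ≤ ‖φ (t * x) - φ t * φ x‖ * ‖ξ‖ := ContinuousLinearMap.le_opNorm _ _
      _ ≤ ε * ‖ξ‖ := mul_le_mul_of_nonneg_right (hrep t x) (norm_nonneg ξ)
    have hinner : ∀ ζ : H, (inner ℂ η ζ : ℂ)
        = σ.toFun (fun t => (inner ℂ (Aux.uA φ x t ξ - φ x ξ) ζ : ℂ)) := by
      intro ζ
      have e : (fun t => (inner ℂ (Aux.uA φ x t ξ - φ x ξ) ζ : ℂ))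
          = (fun t => (inner ℂ (Aux.uA φ x t ξ) ζ : ℂ))
            + fun _ => -(inner ℂ (φ x ξ) ζ : ℂ) := by
        funext t
        simp [sub_eq_add_neg, inner_add_left, inner_neg_left]
      rw [e, σ.map_add _ _ (Aux.uA_bdd σ φ hφ1 x ξ ζ) (LinftyState.isBdd_const _),
        σ.map_const, ← Aux.psiA_inner σ φ hφ1 x ξ ζ]
      rw [hη, inner_sub_left]
      ring
    have hbound : ‖(inner ℂ η η : ℂ)‖ ≤ ε * ‖ξ‖ * ‖η‖ := by
      rw [hinner η]
      refine σ.norm_le ?_ (fun t => ?_)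
      · exact ⟨ε * ‖ξ‖ * ‖η‖, fun t => (norm_inner_le_norm _ _).trans
          (mul_le_mul_of_nonneg_right (hsub t) (norm_nonneg η))⟩
      · exact (norm_inner_le_norm _ _).trans
          (mul_le_mul_of_nonneg_right (hsub t) (norm_nonneg η))
    have hnn : ‖η‖ * ‖η‖ ≤ ε * ‖ξ‖ * ‖η‖ := by
      have : ‖(inner ℂ η η : ℂ)‖ = ‖η‖ * ‖η‖ := by
        rw [inner_self_eq_norm_sq_to_K, ← RCLike.ofReal_pow, RCLike.norm_ofReal,
          abs_of_nonneg (sq_nonneg _), sq]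
      linarith [hbound, this.symm.le, this.le]
    have hη' : ‖η‖ ≤ ε * ‖ξ‖ := by
      rcases eq_or_lt_of_le (norm_nonneg η) with h0 | h0
      · rw [← h0]; positivity
      · exact le_of_mul_le_mul_right (by linarith) h0
    calc ‖(φ x - Aux.psiA σ φ hφ1 x) ξ‖ = ‖-η‖ := by rw [hη, neg_sub]; rfl
    _ = ‖η‖ := norm_neg η
    _ ≤ ε * ‖ξ‖ := hη'
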